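/- Let $a$ be an element of a ring $K$ such that $g(a) = 0$ for some nonzero integer polynomial $g(x)$ with zero constant term, and let $f(x)$ be a minimal polynomial of $a$ (a nonzero integer polynomial of least degree with zero constant term and positive leading coefficient satisfying $f(a) = 0$). Then there exists a positive integer $k$ such that $f(x)$ divides $k \cdot g(x)$ in $\mathbb{Z}[x]$, and moreover $k$ divides every coefficient of $f(x)$. -/

import Mathlib

/-- A (not necessarily unital) ring `K` is finitely separable if every element `a`
lying outside a subring `A` can be separated from `A` by a homomorphism to a finite ring. -/
def IsFinSep (K : Type) [NonUnitalRing K] : Prop :=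
  ∀ (a : K) (A : NonUnitalSubring K), a ∉ A →
    ∃ (F : Type) (_ : NonUnitalRing F) (_ : Finite F),
      ∃ φ : K →ₙ+* F, φ a ∉ ⇑φ '' (A : Set K)

/-- `ppow a n = a ^ (n + 1)`, the positive powers of `a` in a non-unital ring. -/
def ppow {K : Type} [NonUnitalRing K] (a : K) : ℕ → K
  | 0 => a
  | n + 1 => ppow a n * a

/-- Evaluation of an integer polynomial (whose constant term is ignored, hence
meaningful for polynomials with zero constant term) at an element of a non-unital ring. -/
def evalnc {K : Type} [NonUnitalRing K] (p : Polynomial ℤ) (a : K) : K :=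
  ∑ i ∈ Finset.range p.natDegree, p.coeff (i + 1) • ppow a i

/-- `f` is a minimal polynomial of `a`: a nonzero integer polynomial without constant
term annihilating `a`, of least degree, and with smallest positive leading coefficient
among such polynomials of that degree. -/
def IsMinPoly {K : Type} [NonUnitalRing K] (a : K) (f : Polynomial ℤ) : Prop :=
  f ≠ 0 ∧ f.coeff 0 = 0 ∧ evalnc f a = 0 ∧ 0 < f.leadingCoeff ∧
    (∀ g : Polynomial ℤ, g ≠ 0 → g.coeff 0 = 0 → evalnc g a = 0 →
      f.natDegree ≤ g.natDegree) ∧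
    (∀ g : Polynomial ℤ, g ≠ 0 → g.coeff 0 = 0 → evalnc g a = 0 →
      g.natDegree = f.natDegree → 0 < g.leadingCoeff → f.leadingCoeff ≤ g.leadingCoeff)

open Polynomial in
lemma inr_ppow {K : Type} [NonUnitalRing K] (a : K) (n : ℕ) :
    (↑(ppow a n) : Unitization ℤ K) = (↑a : Unitization ℤ K) ^ (n+1) := by
  induction n with
  | zero => simp [ppow]
  | succ n ih => rw [ppow, Unitization.inr_mul, ih]; exact (pow_succ _ _).symm

open Polynomial in
lemma inr_evalnc {K : Type} [NonUnitalRing K] (a : K) (p : Polynomial ℤ)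
    (hp : p.coeff 0 = 0) :
    (↑(evalnc p a) : Unitization ℤ K) = Polynomial.aeval (↑a : Unitization ℤ K) p := by
  have hs : (↑(evalnc p a) : Unitization ℤ K)
      = ∑ i ∈ Finset.range p.natDegree, (↑(p.coeff (i + 1) • ppow a i) : Unitization ℤ K) :=
    map_sum (Unitization.inrHom ℤ ℤ K) _ _
  rw [Polynomial.aeval_eq_sum_range, Finset.sum_range_succ', hs]
  simp [hp, Unitization.inr_smul, inr_ppow]

open Polynomial in
lemma pseudo_div (f : Polynomial ℤ) (hf0 : f ≠ 0) :
    ∀ (n : ℕ) (g : Polynomial ℤ), g.natDegree ≤ n →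
      ∃ (m : ℕ) (q r : Polynomial ℤ),
        C (f.leadingCoeff ^ m) * g = f * q + r ∧ r.degree < f.degree := by
  intro n
  induction n using Nat.strong_induction_on with
  | _ n ih =>
    intro g hgn
    by_cases h1 : g.degree < f.degree
    · exact ⟨0, 0, g, by simp, h1⟩
    by_cases h2 : f.natDegree = 0
    · refine ⟨1, g, 0, ?_, ?_⟩
      · rw [pow_one, add_zero, Polynomial.leadingCoeff, h2]
        conv_rhs => rw [f.eq_C_of_natDegree_eq_zero h2]
      · rw [degree_zero]
        exact bot_lt_iff_ne_bot.2 (fun h => hf0 (degree_eq_bot.1 h))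
    push_neg at h1
    have hfg : f.natDegree ≤ g.natDegree := natDegree_le_natDegree h1
    have hgpos : 0 < g.natDegree := lt_of_lt_of_le (Nat.pos_of_ne_zero h2) hfg
    have hlt : (f.cancelLeads g).natDegree < g.natDegree :=
      natDegree_cancelLeads_lt_of_natDegree_le_natDegree hfg hgpos
    obtain ⟨m, q, r, heq, hr⟩ := ih (n - 1) (by omega) (f.cancelLeads g) (by omega)
    refine ⟨m + 1, q + C (f.leadingCoeff ^ m * g.leadingCoeff) *
      X ^ (g.natDegree - f.natDegree), r, ?_, hr⟩
    rw [cancelLeads, tsub_eq_zero_iff_le.2 hfg, pow_zero, mul_one] at heq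
    simp only [pow_succ, C_mul] at heq ⊢
    linear_combination heq

open Polynomial

/-- The minimal polynomial divides any annihilating polynomial after multiplication by a
suitable positive integer, which moreover divides all coefficients of the minimal polynomial. -/
theorem stmt7 (K : Type) [NonUnitalRing K] (a : K) (g f : Polynomial ℤ)
    (hg0 : g ≠ 0) (hgc : g.coeff 0 = 0) (hga : evalnc g a = 0)
    (hf : IsMinPoly a f) :
    ∃ k : ℕ, 0 < k ∧ f ∣ Polynomial.C (k : ℤ) * g ∧ ∀ i, (k : ℤ) ∣ f.coeff i := by
  classical
  obtain ⟨hf0, hfc, hfa, hflead, hmindeg, -⟩ := hf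
  have hfU : Polynomial.aeval (↑a : Unitization ℤ K) f = 0 := by
    rw [← inr_evalnc a f hfc, hfa, Unitization.inr_zero]
  have hgU : Polynomial.aeval (↑a : Unitization ℤ K) g = 0 := by
    rw [← inr_evalnc a g hgc, hga, Unitization.inr_zero]
  have hexists : ∃ k : ℕ, 0 < k ∧ f ∣ Polynomial.C (k : ℤ) * g := by
    obtain ⟨m, q, r, heq, hr⟩ := pseudo_div f hf0 g.natDegree g le_rfl
    have hrc : r.coeff 0 = 0 := by
      have h := congrArg (fun p => Polynomial.coeff p 0) heq
      simpa [Polynomial.mul_coeff_zero, hfc, hgc] using h.symm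
    have hreq : r = C (f.leadingCoeff ^ m) * g - f * q := by linear_combination -heq
    have hra : evalnc r a = 0 := by
      apply Unitization.inr_injective (R := ℤ)
      rw [inr_evalnc a r hrc, Unitization.inr_zero, hreq, map_sub, map_mul, map_mul,
        hfU, hgU]
      simp
    have hr0 : r = 0 := by
      by_contra hne
      have h1 := hmindeg r hne hrc hra
      have h2 : r.natDegree < f.natDegree := Polynomial.natDegree_lt_natDegree hne hr
      omega
    have hc : 0 < f.leadingCoeff ^ m := pow_pos hflead m
    refine ⟨(f.leadingCoeff ^ m).toNat, by omega, q, ?_⟩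
    rw [Int.toNat_of_nonneg hc.le, heq, hr0, add_zero]
  have hP : ∃ k : ℕ, 0 < k ∧ f ∣ Polynomial.C (k : ℤ) * g := hexists
  set k := Nat.find hP with hkdef
  obtain ⟨hkpos, q, hq⟩ := Nat.find_spec hP
  rw [← hkdef] at hq hkpos
  refine ⟨k, hkpos, ⟨q, hq⟩, ?_⟩
  have key : ∀ p : ℕ, p.Prime → p ∣ k → ¬ ((p : ℤ) ∣ q.content) := by
    intro p hp hpk hpq
    have hCp : Polynomial.C (p : ℤ) ∣ q := (Polynomial.C_dvd_iff_dvd_coeff _ _).2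
      (fun i => dvd_trans hpq (Polynomial.content_dvd_coeff i))
    obtain ⟨q₁, hq₁⟩ := hCp
    obtain ⟨k₁, hk₁⟩ := hpk
    have hk₁pos : 0 < k₁ := by
      refine Nat.pos_of_ne_zero ?_
      rintro rfl
      rw [Nat.mul_zero] at hk₁
      omega
    have hklt : k₁ < k := by
      rw [hk₁]
      nlinarith [hp.two_le, hk₁pos]
    refine Nat.find_min hP hklt ⟨hk₁pos, q₁, ?_⟩
    have hq' := hq
    rw [hk₁, hq₁] at hq'
    have hCpne : (Polynomial.C (p : ℤ)) ≠ 0 := by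
      simp [hp.pos.ne']
    apply mul_left_cancel₀ hCpne
    push_cast at hq'
    rw [Polynomial.C_mul] at hq'
    linear_combination hq'
  have hcop : IsCoprime (k : ℤ) q.content := by
    rw [Int.isCoprime_iff_gcd_eq_one]
    by_contra hne
    obtain ⟨p, hp, hpd⟩ := Nat.exists_prime_and_dvd hne
    have hg1 : (↑(Int.gcd (k : ℤ) q.content) : ℤ) ∣ (k : ℤ) := Int.gcd_dvd_left _ _
    have hg2 : (↑(Int.gcd (k : ℤ) q.content) : ℤ) ∣ q.content := Int.gcd_dvd_right _ _
    have hpk : p ∣ k := Int.natCast_dvd_natCast.1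
      (dvd_trans (Int.natCast_dvd_natCast.2 hpd) hg1)
    have hpq : (p : ℤ) ∣ q.content := dvd_trans (Int.natCast_dvd_natCast.2 hpd) hg2
    exact key p hp hpk hpq
  have hcont : (k : ℤ) * g.content = f.content * q.content := by
    have h := congrArg Polynomial.content hq
    rw [Polynomial.content_C_mul, Polynomial.content_mul,
      Int.normalize_of_nonneg (Int.natCast_nonneg k)] at h
    exact h
  have hdvd : (k : ℤ) ∣ f.content := by
    refine hcop.dvd_of_dvd_mul_right ⟨g.content, hcont.symm⟩
  exact fun i => dvd_trans hdvd (Polynomial.content_dvd_coeff i)
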